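/- Let X be a Hausdorff topological space and let γ : [0,1] → X be an injective path. Then there is no continuous injective map f : Circle → X with range f ⊆ range γ. In particular, there is no continuous injective map from Circle to ℝ. (Paper's Theorem 1.10: no set of points which forms a ring is within a fundamental line.) -/

import Mathlib

open Circle in
instance : ConnectedSpace Circle :=
  Circle.leftInverse_exp_arg.surjective.connectedSpace Circle.exp.continuous

lemma no_circle_to_real (f : Circle → ℝ) (hc : Continuous f) (hi : Function.Injective f) :
    False := by
  set a : Circle := Circle.exp Real.pi with ha
  have ha2 : a * a = 1 := by
    rw [ha, ← Circle.exp_add]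
    simpa [two_mul] using Circle.exp_int_mul_two_pi 1
  have hane : a ≠ 1 := by
    intro h
    have : (a : ℂ) = 1 := by rw [h]; rfl
    rw [ha, Circle.coe_exp] at this
    rw [Complex.exp_mul_I] at this
    simp [Real.cos_pi, Real.sin_pi] at this
    norm_num at this
  -- odd function g z = f (a*z) - f z
  have key : ∃ z : Circle, f (a * z) - f z = 0 := by
    rcases le_total (f (a * 1) - f 1) 0 with h | h
    · exact intermediate_value_univ₂ (a := (1:Circle)) (b := a)
        (f := fun z => f (a * z) - f z) (g := fun _ => (0:ℝ))
        (by fun_prop) continuous_const (by simpa using h)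
        (by simp only [ha2]; simp at h ⊢; linarith)
    · exact intermediate_value_univ₂ (a := a) (b := (1:Circle))
        (f := fun z => f (a * z) - f z) (g := fun _ => (0:ℝ))
        (by fun_prop) continuous_const (by simp only [ha2]; simp at h ⊢; linarith)
        (by simpa using h)
  obtain ⟨z, hz⟩ := key
  have : a * z = z := hi (by linarith [sub_eq_zero.mp hz])
  exact hane (mul_right_cancel (b := z) (by simpa using this))

/-- Paper's Theorem 1.10: no set of points which forms a ring is within a fundamental
line; in particular there is no continuous injective map from the circle to `ℝ`. -/
theorem no_ring_within_arc {X : Type*} [TopologicalSpace X] [T2Space X]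
    (γ : unitInterval → X) (hc : Continuous γ) (hi : Function.Injective γ) :
    (¬ ∃ f : Circle → X, Continuous f ∧ Function.Injective f ∧
        Set.range f ⊆ Set.range γ) ∧
    (¬ ∃ f : Circle → ℝ, Continuous f ∧ Function.Injective f) := by
  constructor
  · rintro ⟨f, hfc, hfi, hfr⟩
    have hemb : Topology.IsEmbedding γ := (hc.isClosedEmbedding hi).toIsEmbedding
    let e : unitInterval ≃ₜ Set.range γ := hemb.toHomeomorph
    let g : Circle → Set.range γ := fun z => ⟨f z, hfr ⟨z, rfl⟩⟩
    have hgc : Continuous g := hfc.subtype_mk _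
    have hgi : Function.Injective g := fun a b h => hfi (congrArg Subtype.val h)
    exact no_circle_to_real (fun z => (e.symm (g z) : ℝ))
      (continuous_subtype_val.comp (e.symm.continuous.comp hgc))
      (fun a b h => hgi (e.symm.injective (Subtype.ext h)))
  · rintro ⟨f, hfc, hfi⟩
    exact no_circle_to_real f hfc hfi
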